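/- For every alphabet Σ and every natural number n ≥ 1, there exist n NFAs A₁, …, Aₙ, each with exactly six states, over the alphabet Σ ∪ {a₁, …, aₙ} (where a₁, …, aₙ are fresh events not in Σ), such that the projection to Σ of the language recognized by the parallel composition Aₙ ‖ ⋯ ‖ A₁ equals Σ^{2ⁿ−1}, the set of all words over Σ of length exactly 2ⁿ − 1. -/

import Mathlib

/-- An NFA with marked states. -/
structure NFAm (Q E : Type) where
  δ : Q → E → Set Q
  I : Set Q
  F : Set Q

/-- Extended transition function on sets of states. -/
def NFAm.run {Q E : Type} (A : NFAm Q E) : List E → Set Q → Set Q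
  | [], S => S
  | a :: w, S => A.run w {q | ∃ p ∈ S, q ∈ A.δ p a}

/-- The language recognized (marked) by the automaton. -/
def NFAm.Lm {Q E : Type} (A : NFAm Q E) : Set (List E) :=
  {w | (A.run w A.I ∩ A.F).Nonempty}

/-- Fully synchronous product of a family of NFAs over a common alphabet. -/
def prodN {n : ℕ} {E : Type} {Qs : Fin n → Type} (A : ∀ i, NFAm (Qs i) E) :
    NFAm (∀ i, Qs i) E where
  δ := fun p a => {q | ∀ i, q i ∈ (A i).δ (p i) a}
  I := {p | ∀ i, p i ∈ (A i).I}
  F := {p | ∀ i, p i ∈ (A i).F}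

/-- Natural projection of a word over `Σ ⊕ Γ` to `Σ` (erasing the `Γ`-events). -/
def projL {E F : Type} : List (E ⊕ F) → List E :=
  List.filterMap (Sum.elim some fun _ => none)

/-- Natural projection of a word over `Σ ⊕ Γ` to `Γ` (erasing the `Σ`-events). -/
def projR {E F : Type} : List (E ⊕ F) → List F :=
  List.filterMap (Sum.elim (fun _ => none) some)

namespace SixCount

/-! ### Arithmetic on bit vectors -/

def valn (n : ℕ) (b : ℕ → Bool) : ℕ := ∑ i ∈ Finset.range n, cond (b i) (2^i) 0
def incb (j : ℕ) (b : ℕ → Bool) : ℕ → Bool :=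
  fun i => if i < j then false else if i = j then true else b i

lemma geom (n : ℕ) : ∑ i ∈ Finset.range n, 2^i = 2^n - 1 := by
  induction n with
  | zero => simp
  | succ n ih =>
    rw [Finset.sum_range_succ, ih]
    have : 1 ≤ 2^n := Nat.one_le_two_pow
    have : 2^(n+1) = 2 * 2^n := by ring
    omega

lemma valn_compl (n : ℕ) (b : ℕ → Bool) :
    valn n b + valn n (fun i => !b i) = 2^n - 1 := by
  rw [valn, valn, ← Finset.sum_add_distrib, ← geom n]
  refine Finset.sum_congr rfl fun i _ => ?_
  cases b i <;> simp

lemma valn_all (n : ℕ) (b : ℕ → Bool) (h : ∀ i < n, b i = true) :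
    valn n b = 2^n - 1 := by
  have h2 := valn_compl n b
  have : valn n (fun i => !b i) = 0 := by
    rw [valn]
    refine Finset.sum_eq_zero fun i hi => ?_
    rw [h i (Finset.mem_range.mp hi)]; rfl
  omega

lemma valn_eq_max (n : ℕ) (b : ℕ → Bool) (h : valn n b = 2^n - 1) :
    ∀ i < n, b i = true := by
  have h2 := valn_compl n b
  have h0 : valn n (fun i => !b i) = 0 := by omega
  intro i hi
  have := (Finset.sum_eq_zero_iff).mp h0 i (Finset.mem_range.mpr hi)
  cases hb : b i
  · exfalso; simp [hb] at this
  · rfl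

lemma valn_inc (n j : ℕ) (b : ℕ → Bool) (hj : j < n) (hbj : b j = false)
    (hlow : ∀ i < j, b i = true) : valn n (incb j b) = valn n b + 1 := by
  have hsplit : ∀ c : ℕ → Bool, valn n c =
      (∑ i ∈ Finset.range j, cond (c i) (2^i) 0) + cond (c j) (2^j) 0
        + ∑ i ∈ Finset.Ico (j+1) n, cond (c i) (2^i) 0 := by
    intro c
    rw [valn, ← Finset.sum_range_succ]
    rw [Finset.range_eq_Ico, Finset.range_eq_Ico]
    exact (Finset.sum_Ico_consecutive (fun i => cond (c i) (2^i) 0) (Nat.zero_le _) (by omega : j + 1 ≤ n)).symm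
  rw [hsplit, hsplit]
  have h1 : ∑ i ∈ Finset.range j, cond (incb j b i) (2^i) 0 = 0 :=
    Finset.sum_eq_zero fun i hi => by
      simp [incb, Finset.mem_range.mp hi]
  have h2 : ∑ i ∈ Finset.range j, cond (b i) (2^i) 0 = 2^j - 1 := by
    rw [← geom j]
    exact Finset.sum_congr rfl fun i hi => by rw [hlow i (Finset.mem_range.mp hi)]; rfl
  have h3 : ∑ i ∈ Finset.Ico (j+1) n, cond (incb j b i) (2^i) 0
      = ∑ i ∈ Finset.Ico (j+1) n, cond (b i) (2^i) 0 :=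
    Finset.sum_congr rfl fun i hi => by
      have h5 := (Finset.mem_Ico.mp hi).1
      have : incb j b i = b i := by
        unfold incb; rw [if_neg (by omega), if_neg (by omega)]
      rw [this]
  have h4 : cond (incb j b j) (2^j) 0 = 2^j := by simp [incb]
  rw [h1, h2, h3, h4, hbj]
  have : 1 ≤ 2^j := Nat.one_le_two_pow
  simp; omega

/-! ### The automata -/

variable {Sig : Type} {n : ℕ}

/-- transition function of the i-th counter component.
States: 0 = bit 0, 1 = bit 1, 2 = pending-0, 3 = pending-1, 4,5 dead. -/
def trans (i : Fin n) (q : Fin 6) (e : Sig ⊕ Fin n) : Set (Fin 6) :=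
  match e with
  | Sum.inl _ => if q.val = 2 then {0} else if q.val = 3 then {1} else ∅
  | Sum.inr j =>
      if q.val = 0 then (if j < i then {2} else if j = i then {3} else ∅)
      else if q.val = 1 then (if i < j then {2} else if j < i then {3} else ∅)
      else ∅

def Ai (i : Fin n) : NFAm (Fin 6) (Sig ⊕ Fin n) := ⟨trans i, {0}, {1}⟩

@[simp] lemma Ai_δ (i : Fin n) : (Ai (Sig := Sig) i).δ = trans i := rfl
@[simp] lemma Ai_I (i : Fin n) : (Ai (Sig := Sig) i).I = {0} := rfl
@[simp] lemma Ai_F (i : Fin n) : (Ai (Sig := Sig) i).F = {1} := rfl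

@[simp] lemma trans_inl_0 (i : Fin n) (σ : Sig) : trans i (0 : Fin 6) (Sum.inl σ) = ∅ := rfl
@[simp] lemma trans_inl_1 (i : Fin n) (σ : Sig) : trans i (1 : Fin 6) (Sum.inl σ) = ∅ := rfl
@[simp] lemma trans_inl_2 (i : Fin n) (σ : Sig) : trans i (2 : Fin 6) (Sum.inl σ) = {0} := rfl
@[simp] lemma trans_inl_3 (i : Fin n) (σ : Sig) : trans i (3 : Fin 6) (Sum.inl σ) = {1} := rfl
@[simp] lemma trans_inr_2 (i j : Fin n) : trans (Sig := Sig) i (2 : Fin 6) (Sum.inr j) = ∅ := rfl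
@[simp] lemma trans_inr_3 (i j : Fin n) : trans (Sig := Sig) i (3 : Fin 6) (Sum.inr j) = ∅ := rfl
lemma trans_inr_0 (i j : Fin n) : trans (Sig := Sig) i (0 : Fin 6) (Sum.inr j)
    = (if j < i then {2} else if j = i then {3} else ∅) := rfl
lemma trans_inr_1 (i j : Fin n) : trans (Sig := Sig) i (1 : Fin 6) (Sum.inr j)
    = (if i < j then {2} else if j < i then {3} else ∅) := rfl

def bitS (n : ℕ) (b : ℕ → Bool) : ∀ _ : Fin n, Fin 6 := fun i => if b i.val then 1 else 0
def pendS (n : ℕ) (b : ℕ → Bool) : ∀ _ : Fin n, Fin 6 := fun i => if b i.val then 3 else 2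

lemma run_empty {Q E : Type} (A : NFAm Q E) : ∀ w, A.run w (∅ : Set Q) = ∅
  | [] => rfl
  | e :: w => by
      have h : {q | ∃ p ∈ (∅ : Set Q), q ∈ A.δ p e} = (∅ : Set Q) := by ext q; simp
      rw [NFAm.run, h, run_empty A w]

lemma run_cons_singleton (A : ∀ i : Fin n, NFAm (Fin 6) (Sig ⊕ Fin n))
    (s : ∀ _ : Fin n, Fin 6) (e : Sig ⊕ Fin n) (w : List (Sig ⊕ Fin n)) :
    (prodN A).run (e :: w) {s} = (prodN A).run w {q | ∀ i, q i ∈ (A i).δ (s i) e} := by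
  rw [NFAm.run]
  congr 1
  ext q
  simp [prodN]

/-- step from a stable configuration on a Σ-letter : blocked -/
lemma step_bit_inl (hn : 0 < n) (b : ℕ → Bool) (σ : Sig) :
    {q : ∀ _ : Fin n, Fin 6 | ∀ i, q i ∈ (Ai (Sig := Sig) i).δ (bitS n b i) (Sum.inl σ)} = ∅ := by
  ext q
  simp only [Set.mem_setOf_eq, Set.mem_empty_iff_false, iff_false]
  intro h
  have := h ⟨0, hn⟩
  revert this
  unfold bitS
  cases b 0 <;> simp

/-- step from a pending configuration on a Γ-letter : blocked -/
lemma step_pend_inr (hn : 0 < n) (b : ℕ → Bool) (j : Fin n) :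
    {q : ∀ _ : Fin n, Fin 6 | ∀ i, q i ∈ (Ai (Sig := Sig) i).δ (pendS n b i) (Sum.inr j)} = ∅ := by
  ext q
  simp only [Set.mem_setOf_eq, Set.mem_empty_iff_false, iff_false]
  intro h
  have := h ⟨0, hn⟩
  revert this
  unfold pendS
  cases b 0 <;> simp

/-- step from a pending configuration on a Σ-letter : settle the bits -/
lemma step_pend_inl (b : ℕ → Bool) (σ : Sig) :
    {q : ∀ _ : Fin n, Fin 6 | ∀ i, q i ∈ (Ai (Sig := Sig) i).δ (pendS n b i) (Sum.inl σ)}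
      = {bitS n b} := by
  have key : ∀ i : Fin n, trans (Sig := Sig) i (pendS n b i) (Sum.inl σ) = {bitS n b i} := by
    intro i
    unfold pendS bitS
    cases b i.val <;> simp
  ext q
  simp only [Set.mem_setOf_eq, Set.mem_singleton_iff, Ai_δ]
  constructor
  · intro h
    funext i
    have := h i
    rw [key i] at this
    exact this
  · rintro rfl i
    rw [key i]
    rfl

/-- step from a stable configuration on a Γ-letter, good case -/
lemma step_bit_inr (b : ℕ → Bool) (j : Fin n) (hbj : b j.val = false)
    (hlow : ∀ i < j.val, b i = true) :
    {q : ∀ _ : Fin n, Fin 6 | ∀ i, q i ∈ (Ai (Sig := Sig) i).δ (bitS n b i) (Sum.inr j)}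
      = {pendS n (incb j.val b)} := by
  have key : ∀ i : Fin n, trans (Sig := Sig) i (bitS n b i) (Sum.inr j)
      = {pendS n (incb j.val b) i} := by
    intro i
    rcases lt_trichotomy i j with hij | hij | hij
    · -- i < j : bit is 1, goes pending-0
      have hij' : (i : ℕ) < (j : ℕ) := hij
      simp [bitS, pendS, incb, hlow i.val hij', trans_inr_1, hij, hij']
    · -- i = j : bit is 0, goes pending-1
      subst hij
      simp [bitS, pendS, incb, hbj, trans_inr_0]
    · -- i > j : unchanged
      have hij' : (j : ℕ) < (i : ℕ) := hij
      have h0 : ¬ i < j := not_lt_of_gt hij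
      have h1 : ¬ (i : ℕ) < (j : ℕ) := by omega
      have h2 : ¬ (i : ℕ) = (j : ℕ) := by omega
      cases hb : b i.val
      · simp [bitS, pendS, incb, hb, trans_inr_0, hij, h1, h2]
      · simp [bitS, pendS, incb, hb, trans_inr_1, hij, h0, h1, h2]
  ext q
  simp only [Set.mem_setOf_eq, Set.mem_singleton_iff, Ai_δ]
  constructor
  · intro h
    funext i
    have := h i
    rw [key i] at this
    exact this
  · rintro rfl i
    rw [key i]
    rfl

/-- step from a stable configuration on a Γ-letter, bad cases -/
lemma step_bit_inr_bad (b : ℕ → Bool) (j : Fin n)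
    (hbad : ¬ (b j.val = false ∧ ∀ i < j.val, b i = true)) :
    {q : ∀ _ : Fin n, Fin 6 | ∀ i, q i ∈ (Ai (Sig := Sig) i).δ (bitS n b i) (Sum.inr j)} = ∅ := by
  push_neg at hbad
  ext q
  simp only [Set.mem_setOf_eq, Set.mem_empty_iff_false, iff_false, Ai_δ]
  intro h
  by_cases hbj : b j.val = false
  · obtain ⟨i0, hi0, hbi0⟩ := hbad hbj
    have hi0n : i0 < n := lt_trans hi0 j.isLt
    have hthis := h ⟨i0, hi0n⟩
    revert hthis
    have hbI : bitS n b ⟨i0, hi0n⟩ = 0 := by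
      unfold bitS
      simp only [Fin.val_mk]
      exact if_neg hbi0
    rw [hbI, trans_inr_0]
    have h1 : ¬ j < (⟨i0, hi0n⟩ : Fin n) := by
      simp only [Fin.lt_def, Fin.val_mk]
      omega
    have h2 : ¬ j = (⟨i0, hi0n⟩ : Fin n) := by
      intro hh
      have : (j : ℕ) = i0 := by rw [hh]
      omega
    rw [if_neg h1, if_neg h2]
    simp
  · have hbj' : b j.val = true := by simpa using hbj
    have hthis := h j
    revert hthis
    have hbI : bitS n b j = 1 := by unfold bitS; simp [hbj']
    rw [hbI, trans_inr_1, if_neg (lt_irrefl _), if_neg (lt_irrefl _)]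
    simp

/-- Forward direction: accepted runs from a stable configuration consume
exactly `2^n - 1 - valn n b` Σ-letters. -/
lemma fwd (hn : 0 < n) : ∀ (N : ℕ) (w : List (Sig ⊕ Fin n)) (b : ℕ → Bool),
    w.length ≤ N →
    ((prodN (fun i : Fin n => Ai (Sig := Sig) i)).run w {bitS n b}
      ∩ (prodN (fun i : Fin n => Ai (Sig := Sig) i)).F).Nonempty →
    valn n b + (projL w).length = 2^n - 1 := by
  intro N
  induction N with
  | zero =>
    intro w b hlen h
    rw [List.length_eq_zero_iff.mp (Nat.le_zero.mp hlen)] at h ⊢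
    obtain ⟨q, hq, hF⟩ := h
    rw [NFAm.run] at hq
    rw [Set.mem_singleton_iff.mp hq] at hF
    have hall : ∀ i < n, b i = true := by
      intro i hi
      have hFi : bitS n b ⟨i, hi⟩ ∈ ({1} : Set (Fin 6)) := hF ⟨i, hi⟩
      unfold bitS at hFi
      revert hFi
      cases hb : b i <;> simp
    simp [projL, valn_all n b hall]
  | succ N ih =>
    intro w b hlen h
    match w with
    | [] => exact ih [] b (by simp) h
    | Sum.inl σ :: w' =>
      exfalso
      rw [run_cons_singleton, step_bit_inl hn, run_empty] at h
      simp at h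
    | Sum.inr j :: w' =>
      rw [run_cons_singleton] at h
      by_cases hcond : b j.val = false ∧ ∀ i < j.val, b i = true
      · rw [step_bit_inr b j hcond.1 hcond.2] at h
        match w' with
        | [] =>
          exfalso
          obtain ⟨q, hq, hF⟩ := h
          rw [NFAm.run] at hq
          rw [Set.mem_singleton_iff.mp hq] at hF
          have hFi : pendS n (incb j.val b) ⟨0, hn⟩ ∈ ({1} : Set (Fin 6)) := hF ⟨0, hn⟩
          unfold pendS at hFi
          revert hFi
          cases incb j.val b 0 <;> simp
        | Sum.inr j' :: w'' =>
          exfalso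
          rw [run_cons_singleton, step_pend_inr hn, run_empty] at h
          simp at h
        | Sum.inl σ :: w'' =>
          rw [run_cons_singleton, step_pend_inl] at h
          have hrec := ih w'' (incb j.val b) (by simp at hlen; omega) h
          have hinc := valn_inc n j.val b j.isLt hcond.1 hcond.2
          have hproj : projL (Sum.inr j :: Sum.inl σ :: w'') = σ :: projL w'' := rfl
          rw [hproj]
          simp only [List.length_cons]
          omega
      · exfalso
        rw [step_bit_inr_bad b j hcond, run_empty] at h
        simp at h

/-- Backward direction: every Σ-word of the right length is realizable. -/
lemma bwd (hn : 0 < n) : ∀ (u : List Sig) (b : ℕ → Bool),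
    valn n b + u.length = 2^n - 1 →
    ∃ w : List (Sig ⊕ Fin n), projL w = u ∧
      ((prodN (fun i : Fin n => Ai (Sig := Sig) i)).run w {bitS n b}
        ∩ (prodN (fun i : Fin n => Ai (Sig := Sig) i)).F).Nonempty := by
  intro u
  induction u with
  | nil =>
    intro b hv
    refine ⟨[], rfl, ⟨bitS n b, rfl, ?_⟩⟩
    intro i
    have hbi := valn_eq_max n b (by simpa using hv) i.val i.isLt
    show bitS n b i ∈ ({1} : Set (Fin 6))
    unfold bitS
    rw [hbi]
    simp
  | cons σ u' ih =>
    intro b hv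
    classical
    have hex : ∃ i, i < n ∧ b i = false := by
      by_contra hno
      push_neg at hno
      have hmax : valn n b = 2^n - 1 := valn_all n b (fun i hi => by
        cases hb : b i
        · exact absurd hb (by simpa using hno i hi)
        · rfl)
      rw [hmax] at hv
      simp only [List.length_cons] at hv
      omega
    set j := Nat.find hex with hj
    obtain ⟨hjn, hbj⟩ := Nat.find_spec hex
    have hlow : ∀ i < j, b i = true := by
      intro i hij
      have hmin := Nat.find_min hex hij
      push_neg at hmin
      cases hb : b i
      · exact absurd hb (by simpa using hmin (lt_trans hij hjn))
      · rfl
    obtain ⟨w', hw'proj, hw'⟩ := ih (incb j b) (by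
      have := valn_inc n j b hjn hbj hlow
      simp only [List.length_cons] at hv
      omega)
    refine ⟨Sum.inr ⟨j, hjn⟩ :: Sum.inl σ :: w', ?_, ?_⟩
    · simp only [projL, List.filterMap_cons, Sum.elim_inr, Sum.elim_inl]
      rw [projL] at hw'proj
      rw [hw'proj]
    · have hjv : ((⟨j, hjn⟩ : Fin n) : ℕ) = j := rfl
      rw [run_cons_singleton]
      rw [show {q : ∀ _ : Fin n, Fin 6 | ∀ i, q i ∈ ((fun i : Fin n => Ai (Sig := Sig) i) i).δ (bitS n b i) (Sum.inr ⟨j, hjn⟩)}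
          = {pendS n (incb j b)} from step_bit_inr b ⟨j, hjn⟩ hbj hlow]
      rw [run_cons_singleton]
      rw [show {q : ∀ _ : Fin n, Fin 6 | ∀ i, q i ∈ ((fun i : Fin n => Ai (Sig := Sig) i) i).δ (pendS n (incb j b) i) (Sum.inl σ)}
          = {bitS n (incb j b)} from step_pend_inl (incb j b) σ]
      exact hw'

end SixCount


/-- for every (finite nonempty) alphabet `Sig` and every `n ≥ 1`
there exist `n` NFAs, each with exactly six states, over `Sig ∪ {a₁, …, aₙ}`
(the fresh events being `Sum.inr j`) whose parallel composition recognizes a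
language whose projection to `Sig` is exactly `Sig^{2ⁿ - 1}`. -/
theorem six_state_counting_automata {Sig : Type} [Fintype Sig] [Nonempty Sig]
    (n : ℕ) (hn : 1 ≤ n) :
    ∃ (Qs : Fin n → Type) (inst : ∀ i, Fintype (Qs i)),
      (∀ i, @Fintype.card (Qs i) (inst i) = 6) ∧
      ∃ A : ∀ i, NFAm (Qs i) (Sig ⊕ Fin n),
        projL '' (prodN A).Lm = {w : List Sig | w.length = 2 ^ n - 1} := by
  refine ⟨fun _ => Fin 6, fun _ => inferInstance, fun i => Fintype.card_fin 6,
    fun i => SixCount.Ai i, ?_⟩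
  have hn' : 0 < n := hn
  have hI : (prodN (fun i : Fin n => SixCount.Ai (Sig := Sig) i)).I
      = {SixCount.bitS n (fun _ => false)} := by
    ext p
    simp only [prodN, Set.mem_setOf_eq, SixCount.Ai_I, Set.mem_singleton_iff,
      Set.mem_singleton_iff]
    rw [funext_iff]
    apply forall_congr'
    intro i
    simp [SixCount.bitS]
  have hval0 : SixCount.valn n (fun _ => false) = 0 := by
    simp [SixCount.valn]
  ext u
  simp only [Set.mem_image, Set.mem_setOf_eq]
  constructor
  · rintro ⟨w, hw, rfl⟩
    have := SixCount.fwd (Sig := Sig) hn' w.length w (fun _ => false) le_rfl (by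
      rw [← hI]; exact hw)
    omega
  · intro hu
    obtain ⟨w, hproj, hacc⟩ := SixCount.bwd (Sig := Sig) hn' u (fun _ => false) (by omega)
    exact ⟨w, by rw [NFAm.Lm, Set.mem_setOf_eq, hI]; exact hacc, hproj⟩
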